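/- Let k be algebraically closed of characteristic ≠ 2 and q(v) = Σ v_i² on kⁿ. The stabilizer in 𝔾_m × SO_n of the vector e₁ equals the image of the embedding O_{n-1} → 𝔾_m × SO_n given by g ↦ (det g, diag(det g, g)), hence is isomorphic to O_{n-1}. -/

import Mathlib

open Matrix

/-- Over an algebraically closed field `k` of characteristic `≠ 2`, the stabilizer in
`𝔾_m × SO_n` of the first standard basis vector `e₁` (for the action `(t,h)·v = t·(h v)`)
equals the image of the embedding `O_{n-1} → 𝔾_m × SO_n`, `g ↦ (det g, diag(det g, g))`.
Here the index set of `SO_n` is `Fin 1 ⊕ Fin (n-1)` and `e₁ = Sum.elim (fun _ => 1) (fun _ => 0)`. -/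
theorem stabilizer_e1_eq_image_orthogonal (k : Type*) [Field k] [IsAlgClosed k]
    (hk : ringChar k ≠ 2) (n : ℕ) :
    {p : kˣ × Matrix (Fin 1 ⊕ Fin (n - 1)) (Fin 1 ⊕ Fin (n - 1)) k |
        p.2 ∈ Matrix.specialOrthogonalGroup (Fin 1 ⊕ Fin (n - 1)) k ∧
          (p.1 : k) • p.2.mulVec (Sum.elim (fun _ => (1 : k)) (fun _ => (0 : k))) =
            Sum.elim (fun _ => (1 : k)) (fun _ => (0 : k))} =
      {p : kˣ × Matrix (Fin 1 ⊕ Fin (n - 1)) (Fin 1 ⊕ Fin (n - 1)) k |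
        ∃ g ∈ Matrix.orthogonalGroup (Fin (n - 1)) k,
          (p.1 : k) = g.det ∧
            p.2 = Matrix.fromBlocks (Matrix.diagonal fun _ => g.det) 0 0 g} := by
  ext ⟨t, A⟩
  simp only [Set.mem_setOf_eq]
  constructor
  · rintro ⟨hSO, hst⟩
    rw [Matrix.mem_specialOrthogonalGroup_iff, Matrix.mem_orthogonalGroup_iff'] at hSO
    obtain ⟨hO, hdet⟩ := hSO
    have hO' : Aᵀ * A = 1 := hO
    have h1 : (t : k) * A (Sum.inl 0) (Sum.inl 0) = 1 := by
      have := congrFun hst (Sum.inl 0)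
      simpa [Matrix.mulVec, dotProduct, Fintype.sum_sum_type] using this
    have h2 : ∀ j, A (Sum.inr j) (Sum.inl 0) = 0 := by
      intro j
      have h := congrFun hst (Sum.inr j)
      simpa [Matrix.mulVec, dotProduct, Fintype.sum_sum_type] using h
    set a := A (Sum.inl 0) (Sum.inl 0) with ha
    have ha2 : a * a = 1 := by
      have := congrFun (congrFun hO' (Sum.inl 0)) (Sum.inl 0)
      simpa [Matrix.mul_apply, Matrix.one_apply, Fintype.sum_sum_type, h2] using this
    have ha0 : a ≠ 0 := by
      intro h0; rw [h0, mul_zero] at ha2; exact zero_ne_one ha2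
    have h3 : ∀ j, A (Sum.inl 0) (Sum.inr j) = 0 := by
      intro j
      have h := congrFun (congrFun hO' (Sum.inl 0)) (Sum.inr j)
      simp [Matrix.mul_apply, Matrix.one_apply, Fintype.sum_sum_type, h2] at h
      exact h.resolve_left ha0
    set g := A.toBlocks₂₂ with hg
    have hA : A = Matrix.fromBlocks (Matrix.diagonal fun _ => a) 0 0 g := by
      ext i j
      rcases i with i | i <;> rcases j with j | j
      · obtain rfl : i = 0 := Subsingleton.elim _ _
        obtain rfl : j = 0 := Subsingleton.elim _ _
        simp [Matrix.diagonal, ha]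
      · obtain rfl : i = 0 := Subsingleton.elim _ _
        simp [h3]
      · obtain rfl : j = 0 := Subsingleton.elim _ _
        simp [h2]
      · simp [hg, Matrix.toBlocks₂₂]
    have hgO : gᵀ * g = 1 := by
      have hb : Aᵀ * A = Matrix.fromBlocks
          ((Matrix.diagonal fun _ => a) * Matrix.diagonal fun _ => a) 0 0 (gᵀ * g) := by
        rw [hA]
        simp [Matrix.fromBlocks_transpose, Matrix.fromBlocks_multiply]
      rw [hO'] at hb
      have := congrArg Matrix.toBlocks₂₂ hb
      simpa [Matrix.toBlocks₂₂, Matrix.one_apply, ← Matrix.ext_iff] using fun i j =>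
        (congrFun (congrFun this i) j).symm
    have hdg : g.det = a := by
      rw [hA] at hdet
      rw [Matrix.det_fromBlocks_zero₂₁, Matrix.det_diagonal] at hdet
      simp at hdet
      calc g.det = (a * a) * g.det := by rw [ha2, one_mul]
        _ = a * (a * g.det) := by ring
        _ = a := by rw [hdet, mul_one]
    have hta : (t : k) = a := by
      have : (t : k) = (t : k) * (a * a) := by rw [ha2, mul_one]
      rw [this, ← mul_assoc, h1, one_mul]
    refine ⟨g, (Matrix.mem_orthogonalGroup_iff' (Fin (n-1)) k).mpr hgO, by rw [hta, hdg], by rw [hA, hdg]⟩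
  · rintro ⟨g, hgO, hdet, hA⟩
    have hg : gᵀ * g = 1 := (Matrix.mem_orthogonalGroup_iff' (Fin (n-1)) k).mp hgO
    have hd2 : g.det * g.det = 1 := by
      have := congrArg Matrix.det hg
      simpa [Matrix.det_mul, Matrix.det_transpose] using this
    constructor
    · rw [Matrix.mem_specialOrthogonalGroup_iff, Matrix.mem_orthogonalGroup_iff']
      constructor
      · show (A)ᵀ * A = 1
        rw [hA]
        have hX : (Matrix.diagonal fun _ : Fin 1 => g.det) * (Matrix.diagonal fun _ => g.det)
            = (1 : Matrix (Fin 1) (Fin 1) k) := by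
          rw [Matrix.diagonal_mul_diagonal]
          ext i j
          obtain rfl : i = j := Subsingleton.elim _ _
          simp [hd2]
        simp only [Matrix.fromBlocks_transpose, Matrix.fromBlocks_multiply,
          Matrix.transpose_zero, Matrix.diagonal_transpose, Matrix.mul_zero, Matrix.zero_mul,
          add_zero, zero_add, hX, hg, Matrix.fromBlocks_one]
      · rw [hA, Matrix.det_fromBlocks_zero₂₁, Matrix.det_diagonal]
        simp [hd2]
    · funext i
      rcases i with i | i
      · obtain rfl : i = 0 := Subsingleton.elim _ _
        simp [hA, Matrix.mulVec, dotProduct, Fintype.sum_sum_type,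
          Matrix.diagonal, hdet, hd2]
      · simp [hA, Matrix.mulVec, dotProduct, Fintype.sum_sum_type]
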